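/- Let U be the inductive type with constructors zero : U, s : U → U, and const : K → U for an arbitrary index type K. A term t ∈ U is a number if t = sⁱ(zero) for some i ≥ 0; it is an odd number if t = s^{2k+1}(zero) for some k ≥ 0. Let the atom type be A = U, an atom t being written o(t). Consider the ground normal program ODD consisting of the clauses (o(s(t)), ∅, {o(t)}) for all t ∈ U. Let Snf = {o(t) | t is an odd number} and St = {o(t) | if t is a number then t is an odd number}. Let (T*, F*) be the Fitting model of ODD. Then Snf ⊆ T* ⊆ St and (A ∖ St) ⊆ F* ⊆ (A ∖ Snf). -/
import Mathlib


/-- The Fitting operator `Φ_P` of a ground normal program `P`. -/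
def fitting {A : Type*} (P : Set (A × Finset A × Finset A)) (TF : Set A × Set A) :
    Set A × Set A :=
  ({h | ∃ pos neg : Finset A, (h, pos, neg) ∈ P ∧ ↑pos ⊆ TF.1 ∧ ↑neg ⊆ TF.2},
   {a | ∀ pos neg : Finset A, (a, pos, neg) ∈ P →
      (↑pos ∩ TF.2 : Set A) ≠ ∅ ∨ (↑neg ∩ TF.1 : Set A) ≠ ∅})

/-- The Herbrand universe of a language with `zero`, unary `s`, and additional
constants indexed by `K`. -/
inductive U (K : Type*) where
  | zero : U K
  | s : U K → U K
  | const : K → U K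

/-- `t` is a number, i.e. `t = sⁱ(zero)` for some `i ≥ 0`. -/
def isNumber {K : Type*} (t : U K) : Prop := ∃ i : ℕ, t = U.s^[i] U.zero

/-- `t` is an odd number, i.e. `t = s^(2k+1)(zero)` for some `k ≥ 0`. -/
def isOddNumber {K : Type*} (t : U K) : Prop := ∃ k : ℕ, t = U.s^[2 * k + 1] U.zero

/-- The ground instantiation of the program `{ o(s(X)) ← ¬o(X). }`;
an atom `o(t)` is represented by the term `t` itself. -/
def ODD (K : Type*) : Set (U K × Finset (U K) × Finset (U K)) :=
  {cl | ∃ t, cl = (U.s t, ∅, {t})}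

/-- `Snf`: the atoms `o(t)` with `t` an odd number. -/
def Snf (K : Type*) : Set (U K) := {t | isOddNumber t}

/-- `St`: the atoms `o(t)` such that if `t` is a number then `t` is odd. -/
def St (K : Type*) : Set (U K) := {t | isNumber t → isOddNumber t}

namespace ODDAux
variable {K : Type*}

/-- Depth of `s` applications. -/
def depth : U K → ℕ
  | U.zero => 0
  | U.s t => depth t + 1
  | U.const _ => 0

lemma depth_iter (i : ℕ) : depth (U.s^[i] (U.zero : U K)) = i := by
  induction i with
  | zero => rfl
  | succ n ih => rw [Function.iterate_succ_apply', depth, ih]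

/-- The candidate greatest bound: odd-depth / even-depth terms. -/
def M (K : Type*) : Set (U K) × Set (U K) :=
  ({t | Odd (depth t)}, {t | Even (depth t)})

lemma M_fixed : fitting (ODD K) (M K) = M K := by
  unfold fitting M ODD
  refine Prod.ext ?_ ?_
  · ext h
    simp only [Set.mem_setOf_eq]
    constructor
    · rintro ⟨pos, neg, ⟨t, heq⟩, hpos, hneg⟩
      simp only [Prod.mk.injEq] at heq
      obtain ⟨h1, h2, h3⟩ := heq
      subst h1
      have ht : Even (depth t) := by
        apply hneg
        simp [h3]
      simpa [depth, Nat.even_add_one] using Even.add_one ht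
    · intro hodd
      match h, hodd with
      | U.zero, hodd => simp [depth] at hodd
      | U.const k, hodd => simp [depth] at hodd
      | U.s t, hodd =>
        refine ⟨∅, {t}, ⟨t, rfl⟩, by simp, ?_⟩
        intro x hx
        simp only [Finset.coe_singleton, Set.mem_singleton_iff] at hx
        subst hx
        simpa [depth, Nat.even_add_one, Nat.odd_add_one] using hodd
  · ext a
    simp only [Set.mem_setOf_eq]
    constructor
    · intro hcond
      match a with
      | U.zero => exact ⟨0, rfl⟩
      | U.const k => exact ⟨0, rfl⟩
      | U.s t =>
        have := hcond ∅ {t} ⟨t, rfl⟩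
        rcases this with h | h
        · simp at h
        · have ht : Odd (depth t) := by
            rw [← Set.nonempty_iff_ne_empty] at h
            obtain ⟨x, hx1, hx2⟩ := h
            simp only [Finset.coe_singleton, Set.mem_singleton_iff] at hx1
            exact hx1 ▸ hx2
          simpa [depth, Nat.even_add_one] using ht
    · intro heven pos neg hmem
      obtain ⟨t, heq⟩ := hmem
      simp only [Prod.mk.injEq] at heq
      obtain ⟨h1, h2, h3⟩ := heq
      right
      have ht : Odd (depth t) := by
        subst h1
        simpa [depth, Nat.even_add_one, Nat.odd_add_one] using heven
      rw [← Set.nonempty_iff_ne_empty]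
      exact ⟨t, by simp [h3], ht⟩

end ODDAux

/-- Example 6 of the paper: the Fitting model `(T*, F*)` of the program `ODD`
(the least fixed point of its Fitting operator) satisfies `Snf ⊆ T* ⊆ St` and
`(A ∖ St) ⊆ F* ⊆ (A ∖ Snf)`, i.e. `ODD` is correct and complete w.r.t. `(Snf, St)`. -/

theorem ODD_fully_correct (K : Type*) (TF : Set (U K) × Set (U K))
    (hTF : IsLeast {x | fitting (ODD K) x = x} TF) :
    Snf K ⊆ TF.1 ∧ TF.1 ⊆ St K ∧ (St K)ᶜ ⊆ TF.2 ∧ TF.2 ⊆ (Snf K)ᶜ := by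
  classical
  obtain ⟨hfix, hleast⟩ := hTF
  have hfix' : fitting (ODD K) TF = TF := hfix
  -- from the fixed point equation
  have hT : ∀ t : U K, t ∈ TF.2 → U.s t ∈ TF.1 := by
    intro t ht
    have : U.s t ∈ (fitting (ODD K) TF).1 := by
      exact ⟨∅, {t}, ⟨t, rfl⟩, by simp, by simpa using ht⟩
    rwa [hfix'] at this
  have hF : ∀ a : U K, (∀ t : U K, a = U.s t → t ∈ TF.1) → a ∈ TF.2 := by
    intro a ha
    have : a ∈ (fitting (ODD K) TF).2 := by
      intro pos neg hmem
      obtain ⟨t, heq⟩ := hmem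
      simp only [Prod.mk.injEq] at heq
      obtain ⟨h1, h2, h3⟩ := heq
      right
      rw [← Set.nonempty_iff_ne_empty]
      exact ⟨t, by simp [h3], ha t h1⟩
    rwa [hfix'] at this
  have key : ∀ k : ℕ, (U.s^[2 * k] (U.zero : U K)) ∈ TF.2 ∧
      (U.s^[2 * k + 1] (U.zero : U K)) ∈ TF.1 := by
    intro k
    induction k with
    | zero =>
      have h0 : (U.zero : U K) ∈ TF.2 := hF _ (by intro t h; cases h)
      exact ⟨by simpa using h0, by simpa using hT _ h0⟩
    | succ n ih =>
      have e1 : (2 * (n + 1)) = (2 * n + 1) + 1 := by ring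
      have hmemF : (U.s^[2 * (n + 1)] (U.zero : U K)) ∈ TF.2 := by
        rw [e1, Function.iterate_succ_apply']
        apply hF
        intro t h
        cases h
        exact ih.2
      refine ⟨hmemF, ?_⟩
      rw [Function.iterate_succ_apply']
      exact hT _ hmemF
  -- upper bound via the fixed point M
  have hle : TF ≤ ODDAux.M K := hleast ODDAux.M_fixed
  have hle1 : TF.1 ⊆ (ODDAux.M K).1 := hle.1
  have hle2 : TF.2 ⊆ (ODDAux.M K).2 := hle.2
  refine ⟨?_, ?_, ?_, ?_⟩
  · rintro t ⟨k, rfl⟩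
    exact (key k).2
  · intro t ht
    have hodd : Odd (ODDAux.depth t) := hle1 ht
    rintro ⟨i, rfl⟩
    rw [ODDAux.depth_iter] at hodd
    obtain ⟨k, hk⟩ := hodd
    exact ⟨k, by rw [hk]⟩
  · intro t ht
    simp only [St, Set.mem_compl_iff, Set.mem_setOf_eq, Classical.not_imp] at ht
    obtain ⟨⟨i, rfl⟩, hnotodd⟩ := ht
    have : ¬ Odd i := by
      intro ⟨k, hk⟩
      exact hnotodd ⟨k, by rw [hk]⟩
    obtain ⟨k, hk⟩ := Nat.not_odd_iff_even.mp this
    have : i = 2 * k := by omega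
    rw [this]
    exact (key k).1
  · intro t ht
    have heven : Even (ODDAux.depth t) := hle2 ht
    rintro ⟨k, rfl⟩
    rw [ODDAux.depth_iter, Nat.even_iff] at heven
    omega
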